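/- For α > 0 and β > -1 and x > a, the Riemann–Liouville fractional integral of order α of the power function t ↦ (t - a)^β with base point a equals (Γ(β+1)/Γ(β+α+1)) · (x - a)^{β+α}. -/

import Mathlib

open intervalIntegral Real

lemma real_beta_eval (α β : ℝ) (hα : 0 < α) (hβ : -1 < β) :
    Real.Gamma (β + 1) * Real.Gamma α =
      Real.Gamma (β + α + 1) * ∫ s in (0:ℝ)..1, s ^ β * (1 - s) ^ (α - 1) := by
  have h1 : 0 < (((β + 1 : ℝ)):ℂ).re := by simpa using by linarith
  have h2 : 0 < (((α : ℝ)):ℂ).re := by simpa using hα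
  have key := Complex.Gamma_mul_Gamma_eq_betaIntegral h1 h2
  have hbeta : Complex.betaIntegral ((β + 1 : ℝ):ℂ) ((α : ℝ):ℂ)
      = ((∫ s in (0:ℝ)..1, s ^ β * (1 - s) ^ (α - 1) : ℝ) : ℂ) := by
    rw [Complex.betaIntegral, ← intervalIntegral.integral_ofReal]
    refine intervalIntegral.integral_congr fun t ht => ?_
    rw [Set.uIcc_of_le zero_le_one] at ht
    rw [Complex.ofReal_mul, Complex.ofReal_cpow ht.1,
      Complex.ofReal_cpow (by linarith [ht.2] : (0:ℝ) ≤ 1 - t)]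
    push_cast
    ring_nf
  rw [hbeta] at key
  have hsum : ((β + 1 : ℝ):ℂ) + ((α : ℝ):ℂ) = ((β + α + 1 : ℝ) : ℂ) := by
    push_cast; ring
  rw [hsum, Complex.Gamma_ofReal, Complex.Gamma_ofReal, Complex.Gamma_ofReal,
    ← Complex.ofReal_mul, ← Complex.ofReal_mul] at key
  exact_mod_cast key

theorem riemann_liouville_power_function
    (a x α β : ℝ) (hα : 0 < α) (hβ : -1 < β) (hax : a < x) :
    (1 / Real.Gamma α) * (∫ t in a..x, (x - t) ^ (α - 1) * (t - a) ^ β) =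
      (Real.Gamma (β + 1) / Real.Gamma (β + α + 1)) * (x - a) ^ (β + α) := by
  set c := x - a with hc
  have hcpos : 0 < c := by simp [hc]; linarith
  have step1 : (∫ t in a..x, (x - t) ^ (α - 1) * (t - a) ^ β)
      = ∫ u in (0:ℝ)..c, (c - u) ^ (α - 1) * u ^ β := by
    have := intervalIntegral.integral_comp_add_right (a := (0:ℝ)) (b := c)
      (f := fun t => (x - t) ^ (α - 1) * (t - a) ^ β) a
    simp only [zero_add, hc, sub_add_cancel] at this
    rw [hc, ← this]
    refine intervalIntegral.integral_congr fun u hu => ?_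
    have : x - (u + a) = c - u := by rw [hc]; ring
    rw [this]
    rw [hc]; ring_nf
  have step2 : (∫ u in (0:ℝ)..c, (c - u) ^ (α - 1) * u ^ β)
      = c * ∫ s in (0:ℝ)..1, (c - s * c) ^ (α - 1) * (s * c) ^ β := by
    have := intervalIntegral.integral_comp_mul_right (a := (0:ℝ)) (b := 1)
      (f := fun u => (c - u) ^ (α - 1) * u ^ β) (ne_of_gt hcpos)
    rw [this]
    simp [smul_eq_mul, mul_comm, hcpos.ne', mul_assoc]
  have step3 : (∫ s in (0:ℝ)..1, (c - s * c) ^ (α - 1) * (s * c) ^ β)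
      = c ^ (α - 1) * c ^ β * ∫ s in (0:ℝ)..1, s ^ β * (1 - s) ^ (α - 1) := by
    rw [← intervalIntegral.integral_const_mul]
    refine intervalIntegral.integral_congr fun s hs => ?_
    rw [Set.uIcc_of_le zero_le_one] at hs
    have h1 : c - s * c = c * (1 - s) := by ring
    have h2 : s * c = c * s := by ring
    rw [h1, h2, Real.mul_rpow hcpos.le (by linarith [hs.2]),
      Real.mul_rpow hcpos.le hs.1]
    ring
  have hB := real_beta_eval α β hα hβ
  have hGα : Real.Gamma α ≠ 0 := (Real.Gamma_pos_of_pos hα).ne'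
  have hGs : Real.Gamma (β + α + 1) ≠ 0 :=
    (Real.Gamma_pos_of_pos (by linarith)).ne'
  have hcpow : c * (c ^ (α - 1) * c ^ β) = c ^ (β + α) := by
    calc c * (c ^ (α - 1) * c ^ β) = c ^ (1:ℝ) * c ^ (α - 1) * c ^ β := by
          rw [Real.rpow_one]; ring
      _ = c ^ (β + α) := by
          rw [← Real.rpow_add hcpos, ← Real.rpow_add hcpos]; ring_nf
  rw [step1, step2, step3]
  have hBval : (∫ s in (0:ℝ)..1, s ^ β * (1 - s) ^ (α - 1))
      = Real.Gamma (β + 1) * Real.Gamma α / Real.Gamma (β + α + 1) := by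
    field_simp
    linarith [hB]
  rw [hBval, ← hcpow]
  field_simp
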